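/- Soundness of NSMB: if a nested-sequent Γ ⇒ Δ, T is provable in NSMB, then Γ ⇒ Δ, T is valid. -/

import Mathlib

set_option maxHeartbeats 1000000

namespace MBQL

/-- The fixed finite set `J ⊆ [0,1]` of inner-product values, with `0, 1 ∈ J`. -/
structure MBParams where
  J : Set ℝ
  finite : J.Finite
  subI : J ⊆ Set.Icc (0:ℝ) 1
  zero_mem : (0:ℝ) ∈ J
  one_mem : (1:ℝ) ∈ J

/-- Formulas of **MB**: `A ::= p | ⊤ | ⊥ | ¬A | A∧A | □^c_α A | □^o_α A` (α ∈ J). -/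
inductive MBForm (Pm : MBParams) : Type
  | var : ℕ → MBForm Pm
  | top : MBForm Pm
  | bot : MBForm Pm
  | neg : MBForm Pm → MBForm Pm
  | conj : MBForm Pm → MBForm Pm → MBForm Pm
  | boxc : Pm.J → MBForm Pm → MBForm Pm
  | boxo : Pm.J → MBForm Pm → MBForm Pm

noncomputable instance {Pm : MBParams} : DecidableEq (MBForm Pm) := Classical.decEq _

/-- Valuation of a formula, given worlds `S`, a relation `R : S → S → ℝ` and a
valuation `V` of the propositional variables. -/
def MBForm.valR {Pm : MBParams} {S : Type} (R : S → S → ℝ) (V : ℕ → Set S) :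
    MBForm Pm → Set S
  | .var n => V n
  | .top => Set.univ
  | .bot => ∅
  | .neg A => (A.valR R V)ᶜ
  | .conj A B => A.valR R V ∩ B.valR R V
  | .boxc α A => {s | ∀ t, (α : ℝ) ≤ R s t → t ∈ A.valR R V}
  | .boxo α A => {s | ∀ t, (α : ℝ) < R s t → t ∈ A.valR R V}

/-- An EQL-frame. -/
structure EQLFrame where
  S : Type
  nonempty : Nonempty S
  R : S → S → ℝ
  mem_Icc : ∀ s t, R s t ∈ Set.Icc (0:ℝ) 1
  eq_one_iff : ∀ s t, (R s t = 1 ↔ s = t)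
  symm : ∀ s t, R s t = R t s

/-- An MB-realization. -/
structure MBRealization (Pm : MBParams) where
  F : EQLFrame
  P : Set (Set F.S)
  univ_mem : Set.univ ∈ P
  empty_mem : ∅ ∈ P
  inter_mem : ∀ X ∈ P, ∀ Y ∈ P, X ∩ Y ∈ P
  compl_mem : ∀ X ∈ P, Xᶜ ∈ P
  boxc_mem : ∀ α ∈ Pm.J, ∀ X ∈ P, {s | ∀ t, α ≤ F.R s t → t ∈ X} ∈ P
  boxo_mem : ∀ α ∈ Pm.J, ∀ X ∈ P, {s | ∀ t, α < F.R s t → t ∈ X} ∈ P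
  V : ℕ → Set F.S
  V_mem : ∀ n, V n ∈ P

/-- The extended valuation of a formula in an MB-realization. -/
def MBRealization.val {Pm : MBParams} (M : MBRealization Pm) (A : MBForm Pm) :
    Set M.F.S := A.valR M.F.R M.V

/-- Validity of an MB-formula. -/
def MBValid {Pm : MBParams} (A : MBForm Pm) : Prop :=
  ∀ (M : MBRealization Pm) (s : M.F.S), s ∈ M.val A

inductive Side : Type
  | c : Side
  | o : Side
deriving DecidableEq

/-- A label `(α, d)` on a modal bracket, with `α ∈ J − {1}`. -/
structure MBLab (Pm : MBParams) where
  α : ℝ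
  memJ : α ∈ Pm.J
  ne_one : α ≠ 1
  d : Side

mutual
/-- Nested-sequents: a finite tree whose nodes are sequents (pairs of finite
sets of formulas) and whose edges carry labels. -/
inductive NSeq (Pm : MBParams) : Type
  | node : Finset (MBForm Pm) → Finset (MBForm Pm) → NSeqs Pm → NSeq Pm
/-- A finite list of labelled child nested-sequents. -/
inductive NSeqs (Pm : MBParams) : Type
  | nil : NSeqs Pm
  | cons : MBLab Pm → NSeq Pm → NSeqs Pm → NSeqs Pm
end

/-- The `i`-th labelled child. -/
def NSeqs.get {Pm : MBParams} : NSeqs Pm → ℕ → Option (MBLab Pm × NSeq Pm)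
  | .nil, _ => none
  | .cons l t _, 0 => some (l, t)
  | .cons _ _ ts, n+1 => ts.get n

/-- `SubAt t p u`: the subtree of `t` at the path (node address) `p` is `u`. -/
inductive SubAt {Pm : MBParams} : NSeq Pm → List ℕ → NSeq Pm → Prop
  | here (t : NSeq Pm) : SubAt t [] t
  | there {Γ Δ : Finset (MBForm Pm)} {ts : NSeqs Pm} {i : ℕ} {l : MBLab Pm}
      {u v : NSeq Pm} {p : List ℕ} :
      NSeqs.get ts i = some (l, u) → SubAt u p v → SubAt (.node Γ Δ ts) (i :: p) v

/-- `p` is (the address of) a node of `t`. -/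
def IsNode {Pm : MBParams} (t : NSeq Pm) (p : List ℕ) : Prop := ∃ u, SubAt t p u

mutual
/-- Replace the sequent at the node with address `p` by `Γ' ⇒ Δ'`
(children are kept). -/
def NSeq.setSeq {Pm : MBParams} :
    NSeq Pm → List ℕ → Finset (MBForm Pm) → Finset (MBForm Pm) → NSeq Pm
  | .node _ _ ts, [], Γ', Δ' => .node Γ' Δ' ts
  | .node Γ Δ ts, i :: p, Γ', Δ' => .node Γ Δ (NSeqs.setSeqs ts i p Γ' Δ')
def NSeqs.setSeqs {Pm : MBParams} :
    NSeqs Pm → ℕ → List ℕ → Finset (MBForm Pm) → Finset (MBForm Pm) → NSeqs Pm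
  | .nil, _, _, _, _ => .nil
  | .cons l t ts, 0, p, Γ', Δ' => .cons l (t.setSeq p Γ' Δ') ts
  | .cons l t ts, n+1, p, Γ', Δ' => .cons l t (NSeqs.setSeqs ts n p Γ' Δ')
end

/-- Append a labelled child at the end of a children list. -/
def NSeqs.snoc {Pm : MBParams} : NSeqs Pm → MBLab Pm → NSeq Pm → NSeqs Pm
  | .nil, l, u => .cons l u .nil
  | .cons l' t ts, l, u => .cons l' t (ts.snoc l u)

mutual
/-- Add a new child `[u]_l` at the node with address `p`. -/
def NSeq.addChild {Pm : MBParams} : NSeq Pm → List ℕ → MBLab Pm → NSeq Pm → NSeq Pm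
  | .node Γ Δ ts, [], l, u => .node Γ Δ (ts.snoc l u)
  | .node Γ Δ ts, i :: p, l, u => .node Γ Δ (NSeqs.addChilds ts i p l u)
def NSeqs.addChilds {Pm : MBParams} : NSeqs Pm → ℕ → List ℕ → MBLab Pm → NSeq Pm → NSeqs Pm
  | .nil, _, _, _, _ => .nil
  | .cons l' t ts, 0, p, l, u => .cons l' (t.addChild p l u) ts
  | .cons l' t ts, n+1, p, l, u => .cons l' t (NSeqs.addChilds ts n p l u)
end


/-- Logical connectives defined by abbreviation: `A ∨ B`. -/
def MBForm.or {Pm : MBParams} (A B : MBForm Pm) : MBForm Pm := .neg (.conj (.neg A) (.neg B))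

/-- `A → B := ¬A ∨ B`. -/
def MBForm.imp {Pm : MBParams} (A B : MBForm Pm) : MBForm Pm := (MBForm.neg A).or B

/-- Conjunction of a list of formulas. -/
def conjList {Pm : MBParams} : List (MBForm Pm) → MBForm Pm
  | [] => .top
  | [A] => A
  | A :: B :: rest => .conj A (conjList (B :: rest))

/-- Disjunction of a list of formulas. -/
def disjList {Pm : MBParams} : List (MBForm Pm) → MBForm Pm
  | [] => .bot
  | [A] => A
  | A :: B :: rest => (A).or (disjList (B :: rest))

/-- `⋀Γ → ⋁Δ`. -/
noncomputable def seqForm {Pm : MBParams} (Γ Δ : Finset (MBForm Pm)) : MBForm Pm :=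
  (conjList Γ.toList).imp (disjList Δ.toList)

/-- The box corresponding to a bracket label. -/
def MBLab.box {Pm : MBParams} (l : MBLab Pm) (A : MBForm Pm) : MBForm Pm :=
  match l.d with
  | .c => .boxc ⟨l.α, l.memJ⟩ A
  | .o => .boxo ⟨l.α, l.memJ⟩ A

mutual
/-- The interpretation `τ` of a nested-sequent as a formula. -/
noncomputable def NSeq.tau {Pm : MBParams} : NSeq Pm → MBForm Pm
  | .node Γ Δ ts => NSeqs.tauAux (seqForm Γ Δ) ts
noncomputable def NSeqs.tauAux {Pm : MBParams} : MBForm Pm → NSeqs Pm → MBForm Pm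
  | A, .nil => A
  | A, .cons l t ts => NSeqs.tauAux (A.or (l.box t.tau)) ts
end

/-- `E` is an embedding of the nested-sequent `t` into the realization `M`
(`E` is given on node addresses). -/
def IsEmb {Pm : MBParams} (M : MBRealization Pm) (t : NSeq Pm)
    (E : List ℕ → M.F.S) : Prop :=
  ∀ p Γ Δ ts i l u, SubAt t p (.node Γ Δ ts) → NSeqs.get ts i = some (l, u) →
    (l.d = Side.c → l.α ≤ M.F.R (E p) (E (p ++ [i]))) ∧
    (l.d = Side.o → l.α < M.F.R (E p) (E (p ++ [i])))

/-- The nested-sequent `t` is false in `M` under `E`. -/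
def FalseUnder {Pm : MBParams} (M : MBRealization Pm) (t : NSeq Pm)
    (E : List ℕ → M.F.S) : Prop :=
  ∀ p Γ Δ ts, SubAt t p (.node Γ Δ ts) →
    (∀ A ∈ Γ, E p ∈ M.val A) ∧ (∀ A ∈ Δ, E p ∉ M.val A)

/-- Validity of a nested-sequent: it is not false under any embedding into
any MB-realization. -/
def NSValid {Pm : MBParams} (t : NSeq Pm) : Prop :=
  ∀ (M : MBRealization Pm) (E : List ℕ → M.F.S), IsEmb M t E → ¬ FalseUnder M t E


/-- `□^d_α A`. -/
def mkBox {Pm : MBParams} (d : Side) (α : Pm.J) (A : MBForm Pm) : MBForm Pm :=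
  match d with
  | .c => .boxc α A
  | .o => .boxo α A

/-- The total order `⪯` on `I × {c,o}`: `pleq α d β d'` means `(α,d) ⪯ (β,d')`. -/
def pleq : ℝ → Side → ℝ → Side → Prop
  | α, .o, β, .c => α < β
  | α, _, β, _ => α ≤ β

/-- Provability in the nested-sequent calculus **NSMB**.  The boolean
parameter records whether the rule (cut) may be used. -/
inductive Provable {Pm : MBParams} : Bool → NSeq Pm → Prop
  /-- axiom `‖A, Γ ⇒ Δ, A, T‖` -/
  | axId {cut : Bool} {t : NSeq Pm} {p Γ Δ ts A} :
      SubAt t p (.node Γ Δ ts) → A ∈ Γ → A ∈ Δ → Provable cut t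
  /-- axiom `‖Γ ⇒ Δ, ⊤, T‖` -/
  | axTop {cut : Bool} {t : NSeq Pm} {p Γ Δ ts} :
      SubAt t p (.node Γ Δ ts) → MBForm.top ∈ Δ → Provable cut t
  /-- axiom `‖⊥, Γ ⇒ Δ, T‖` -/
  | axBot {cut : Bool} {t : NSeq Pm} {p Γ Δ ts} :
      SubAt t p (.node Γ Δ ts) → MBForm.bot ∈ Γ → Provable cut t
  /-- axiom `‖Γ ⇒ Δ, □^o_1 A, T‖` -/
  | axBoxO1 {cut : Bool} {t : NSeq Pm} {p Γ Δ ts A} :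
      SubAt t p (.node Γ Δ ts) → MBForm.boxo ⟨1, Pm.one_mem⟩ A ∈ Δ → Provable cut t
  /-- rule (cut) -/
  | cutR {t : NSeq Pm} {p Γ Δ ts A} :
      SubAt t p (.node Γ Δ ts) →
      Provable true (t.setSeq p Γ (insert A Δ)) →
      Provable true (t.setSeq p (insert A Γ) Δ) →
      Provable true t
  /-- rule (wL) -/
  | wL {cut : Bool} {t : NSeq Pm} {p Γ Δ ts A} :
      SubAt t p (.node Γ Δ ts) → Provable cut t →
      Provable cut (t.setSeq p (insert A Γ) Δ)
  /-- rule (wR) -/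
  | wR {cut : Bool} {t : NSeq Pm} {p Γ Δ ts A} :
      SubAt t p (.node Γ Δ ts) → Provable cut t →
      Provable cut (t.setSeq p Γ (insert A Δ))
  /-- rule (¬L) -/
  | negL {cut : Bool} {t : NSeq Pm} {p Γ Δ ts A} :
      SubAt t p (.node Γ Δ ts) →
      Provable cut (t.setSeq p Γ (insert A Δ)) →
      Provable cut (t.setSeq p (insert (MBForm.neg A) Γ) Δ)
  /-- rule (¬R) -/
  | negR {cut : Bool} {t : NSeq Pm} {p Γ Δ ts A} :
      SubAt t p (.node Γ Δ ts) →
      Provable cut (t.setSeq p (insert A Γ) Δ) →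
      Provable cut (t.setSeq p Γ (insert (MBForm.neg A) Δ))
  /-- rule (∧L) -/
  | andL {cut : Bool} {t : NSeq Pm} {p Γ Δ ts A B} :
      SubAt t p (.node Γ Δ ts) →
      Provable cut (t.setSeq p (insert A (insert B Γ)) Δ) →
      Provable cut (t.setSeq p (insert (MBForm.conj A B) Γ) Δ)
  /-- rule (∧R) -/
  | andR {cut : Bool} {t : NSeq Pm} {p Γ Δ ts A B} :
      SubAt t p (.node Γ Δ ts) →
      Provable cut (t.setSeq p Γ (insert A Δ)) →
      Provable cut (t.setSeq p Γ (insert B Δ)) →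
      Provable cut (t.setSeq p Γ (insert (MBForm.conj A B) Δ))
  /-- rule (□L), with side condition `(α,d) ⪯ (β,d')` -/
  | boxL {cut : Bool} {t : NSeq Pm} {p Γ Δ ts i l u Γ' Δ' ts' A} {α : Pm.J} {d : Side} :
      SubAt t p (.node Γ Δ ts) → NSeqs.get ts i = some (l, u) →
      SubAt t (p ++ [i]) (.node Γ' Δ' ts') →
      pleq (α : ℝ) d l.α l.d →
      Provable cut (t.setSeq (p ++ [i]) (insert A Γ') Δ') →
      Provable cut (t.setSeq p (insert (mkBox d α A) Γ) Δ)
  /-- rule (□L sym), with side condition `(α,d) ⪯ (β,d')` -/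
  | boxLsym {cut : Bool} {t : NSeq Pm} {p Γ Δ ts i l u Γ' Δ' ts' A} {α : Pm.J} {d : Side} :
      SubAt t p (.node Γ Δ ts) → NSeqs.get ts i = some (l, u) →
      SubAt t (p ++ [i]) (.node Γ' Δ' ts') →
      pleq (α : ℝ) d l.α l.d →
      Provable cut (t.setSeq p (insert A Γ) Δ) →
      Provable cut (t.setSeq (p ++ [i]) (insert (mkBox d α A) Γ') Δ')
  /-- rule (□L self), with side condition `(α,d) ≠ (1,o)` -/
  | boxLself {cut : Bool} {t : NSeq Pm} {p Γ Δ ts A} {α : Pm.J} {d : Side} :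
      SubAt t p (.node Γ Δ ts) → ¬((α : ℝ) = 1 ∧ d = Side.o) →
      Provable cut (t.setSeq p (insert A Γ) Δ) →
      Provable cut (t.setSeq p (insert (mkBox d α A) Γ) Δ)
  /-- rule (□^c_0): erase `A` from the left of one node and add `□^c_0 A`
  to the left of another arbitrary node -/
  | boxC0 {cut : Bool} {t : NSeq Pm} {p Γ Δ ts q Γ'' Δ'' ts'' A} :
      SubAt t p (.node Γ Δ ts) → SubAt t q (.node Γ'' Δ'' ts'') →
      Provable cut (t.setSeq p (insert A Γ) Δ) →
      Provable cut (t.setSeq q (insert (MBForm.boxc ⟨0, Pm.zero_mem⟩ A) Γ'') Δ'')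
  /-- rule (□R) -/
  | boxR {cut : Bool} {t : NSeq Pm} {p Γ Δ ts A} {l : MBLab Pm} :
      SubAt t p (.node Γ Δ ts) →
      Provable cut (t.addChild p l (.node ∅ {A} .nil)) →
      Provable cut (t.setSeq p Γ (insert (l.box A) Δ))
  /-- rule (□R self) -/
  | boxRself {cut : Bool} {t : NSeq Pm} {p Γ Δ ts A} :
      SubAt t p (.node Γ Δ ts) →
      Provable cut (t.setSeq p Γ (insert A Δ)) →
      Provable cut (t.setSeq p Γ (insert (MBForm.boxc ⟨1, Pm.one_mem⟩ A) Δ))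


/-- The subformula relation. -/
inductive Subf {Pm : MBParams} : MBForm Pm → MBForm Pm → Prop
  | refl (A : MBForm Pm) : Subf A A
  | negS {A B : MBForm Pm} : Subf A B → Subf A (.neg B)
  | conjL {A B C : MBForm Pm} : Subf A B → Subf A (.conj B C)
  | conjR {A B C : MBForm Pm} : Subf A C → Subf A (.conj B C)
  | boxcS {A B : MBForm Pm} {α : Pm.J} : Subf A B → Subf A (.boxc α B)
  | boxoS {A B : MBForm Pm} {α : Pm.J} : Subf A B → Subf A (.boxo α B)

/-- `A` occurs in (some sequent of) the nested-sequent `t`. -/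
def OccursIn {Pm : MBParams} (A : MBForm Pm) (t : NSeq Pm) : Prop :=
  ∃ p Γ Δ ts, SubAt t p (.node Γ Δ ts) ∧ (A ∈ Γ ∨ A ∈ Δ)

/-- One step of the saturation procedure used to build `Γ_C ⇒ Δ_C, T_C`.
The state is a nested-sequent together with the set of (address, formula)
occurrences of right-hand boxed formulas that have already been processed by
step (8). -/
inductive SatStep {Pm : MBParams} :
    NSeq Pm × Set (List ℕ × MBForm Pm) → NSeq Pm × Set (List ℕ × MBForm Pm) → Prop
  /-- step (1): `A ∧ B` on the left -/
  | andL {t D p Γ Δ ts A B} :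
      SubAt t p (.node Γ Δ ts) → MBForm.conj A B ∈ Γ →
      SatStep (t, D) (t.setSeq p (insert A (insert B Γ)) Δ, D)
  /-- step (2): `A ∧ B` on the right; the disjunct keeping unprovability is adopted -/
  | andR {t D p Γ Δ ts A B C} :
      SubAt t p (.node Γ Δ ts) → MBForm.conj A B ∈ Δ → (C = A ∨ C = B) →
      ¬ Provable true (t.setSeq p Γ (insert C Δ)) →
      SatStep (t, D) (t.setSeq p Γ (insert C Δ), D)
  /-- step (3): `¬A` on the left -/
  | negL {t D p Γ Δ ts A} :
      SubAt t p (.node Γ Δ ts) → MBForm.neg A ∈ Γ →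
      SatStep (t, D) (t.setSeq p Γ (insert A Δ), D)
  /-- step (4): `¬A` on the right -/
  | negR {t D p Γ Δ ts A} :
      SubAt t p (.node Γ Δ ts) → MBForm.neg A ∈ Δ →
      SatStep (t, D) (t.setSeq p (insert A Γ) Δ, D)
  /-- step (5): `□^d_α A` on the left of the parent of a bracket with `(α,d) ⪯ (β,d')` -/
  | boxL {t D p Γ Δ ts i l u Γ' Δ' ts' A} {α : Pm.J} {d : Side} :
      SubAt t p (.node Γ Δ ts) → NSeqs.get ts i = some (l, u) →
      SubAt t (p ++ [i]) (.node Γ' Δ' ts') →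
      pleq (α : ℝ) d l.α l.d → mkBox d α A ∈ Γ →
      SatStep (t, D) (t.setSeq (p ++ [i]) (insert A Γ') Δ', D)
  /-- step (6): `□^d_α A` on the left of the child of a bracket with `(α,d) ⪯ (β,d')` -/
  | boxLsym {t D p Γ Δ ts i l u Γ' Δ' ts' A} {α : Pm.J} {d : Side} :
      SubAt t p (.node Γ Δ ts) → NSeqs.get ts i = some (l, u) →
      SubAt t (p ++ [i]) (.node Γ' Δ' ts') →
      pleq (α : ℝ) d l.α l.d → mkBox d α A ∈ Γ' →
      SatStep (t, D) (t.setSeq p (insert A Γ) Δ, D)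
  /-- step (7): `□^d_α A` on the left, `(α,d) ≠ (1,o)` -/
  | boxLself {t D p Γ Δ ts A} {α : Pm.J} {d : Side} :
      SubAt t p (.node Γ Δ ts) → ¬((α : ℝ) = 1 ∧ d = Side.o) → mkBox d α A ∈ Γ →
      SatStep (t, D) (t.setSeq p (insert A Γ) Δ, D)
  /-- step (8): `□^d_α A` on the right (`α ≠ 1`), performed once per occurrence -/
  | boxR {t D p Γ Δ ts A} {α : Pm.J} {d : Side} (hne : (α : ℝ) ≠ 1) :
      SubAt t p (.node Γ Δ ts) → mkBox d α A ∈ Δ → (p, mkBox d α A) ∉ D →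
      SatStep (t, D)
        (t.addChild p ⟨(α : ℝ), α.2, hne, d⟩ (.node ∅ {A} .nil),
         insert (p, mkBox d α A) D)
  /-- step (9): `□^c_1 A` on the right -/
  | boxRself {t D p Γ Δ ts A} :
      SubAt t p (.node Γ Δ ts) → MBForm.boxc ⟨1, Pm.one_mem⟩ A ∈ Δ →
      SatStep (t, D) (t.setSeq p Γ (insert A Δ), D)
  /-- step (10): `□^c_0 A` on the left of some node: add `A` to the left of any node -/
  | boxC0 {t D p Γ Δ ts q Γ'' Δ'' ts'' A} :
      SubAt t p (.node Γ Δ ts) → MBForm.boxc ⟨0, Pm.zero_mem⟩ A ∈ Γ →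
      SubAt t q (.node Γ'' Δ'' ts'') →
      SatStep (t, D) (t.setSeq q (insert A Γ'') Δ'', D)

/-- A state of the saturation procedure is saturated (terminal) when no
saturation step changes it any more. -/
def Saturated {Pm : MBParams} (s : NSeq Pm × Set (List ℕ × MBForm Pm)) : Prop :=
  ∀ s', SatStep s s' → s' = s


mutual
/-- The subtree of `t` at address `p`, as a function. -/
def NSeq.sub? {Pm : MBParams} : NSeq Pm → List ℕ → Option (NSeq Pm)
  | t, [] => some t
  | .node _ _ ts, i :: p => NSeqs.subs? ts i p
def NSeqs.subs? {Pm : MBParams} : NSeqs Pm → ℕ → List ℕ → Option (NSeq Pm)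
  | .nil, _, _ => none
  | .cons _ t _, 0, p => t.sub? p
  | .cons _ _ ts, n+1, p => NSeqs.subs? ts n p
end

/-- The label of the edge from the node at address `p` to its `i`-th child. -/
def labelAt {Pm : MBParams} (t : NSeq Pm) (p : List ℕ) (i : ℕ) : Option (MBLab Pm) :=
  match t.sub? p with
  | some (.node _ _ ts) => (NSeqs.get ts i).map Prod.fst
  | none => none

/-- The set of elements of `J` appearing in a formula. -/
def MBForm.jsetF {Pm : MBParams} : MBForm Pm → Set ℝ
  | .var _ => ∅
  | .top => ∅
  | .bot => ∅
  | .neg A => A.jsetF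
  | .conj A B => A.jsetF ∪ B.jsetF
  | .boxc α A => insert (α : ℝ) A.jsetF
  | .boxo α A => insert (α : ℝ) A.jsetF

mutual
/-- The numbers appearing in a nested-sequent (in formulas or brackets). -/
def NSeq.jsetT {Pm : MBParams} : NSeq Pm → Set ℝ
  | .node Γ Δ ts =>
      (⋃ A ∈ Γ, MBForm.jsetF A) ∪ (⋃ A ∈ Δ, MBForm.jsetF A) ∪ NSeqs.jsetTs ts
def NSeqs.jsetTs {Pm : MBParams} : NSeqs Pm → Set ℝ
  | .nil => ∅
  | .cons l t ts => insert l.α (t.jsetT ∪ NSeqs.jsetTs ts)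
end

/-- `(Γ ⇒ Δ, T)_J`: the numbers appearing in the nested-sequent, with `0` and `1`. -/
def jset {Pm : MBParams} (t : NSeq Pm) : Set ℝ :=
  insert (0:ℝ) (insert (1:ℝ) t.jsetT)

/-- `U` is an interpolated set of `Js`. -/
def Interpolated (Js U : Set ℝ) : Prop :=
  U.Finite ∧ U ⊆ Set.Icc (0:ℝ) 1 ∧ Js ⊆ U ∧
    ∀ α ∈ Js, ∀ β ∈ Js, α < β → (∀ γ ∈ Js, ¬ (α < γ ∧ γ < β)) →
      ∃! δ, δ ∈ U ∧ α < δ ∧ δ < β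

/-- `Suc U α`: the successor of `α` in the interpolated set `U` (with `Suc 1 = 1`). -/
noncomputable def Suc (U : Set ℝ) (α : ℝ) : ℝ := sInf ((U ∩ Set.Ioi α) ∪ {1})

/-- Auxiliary value of the canonical relation in case `q` is the child of `p`
via a bracket (`β` for `[·]^c_β`, `Suc β` for `[·]^o_β`), and `0` otherwise. -/
noncomputable def lval {Pm : MBParams} (t : NSeq Pm) (U : Set ℝ) (p q : List ℕ) : ℝ :=
  match q.getLast? with
  | none => 0
  | some i =>
      if q.dropLast = p then
        match labelAt t p i with
        | some l => (match l.d with | Side.c => l.α | Side.o => Suc U l.α)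
        | none => 0
      else 0

/-- The canonical relation `R_C` (on node addresses). -/
noncomputable def RC {Pm : MBParams} (t : NSeq Pm) (U : Set ℝ) (p q : List ℕ) : ℝ :=
  if p = q then 1 else max (lval t U p q) (lval t U q p)

/-- The worlds of the canonical model: the nodes of the saturated nested-sequent. -/
def World {Pm : MBParams} (t : NSeq Pm) : Type := {p : List ℕ // IsNode t p}

/-- The canonical relation `R_C`, as a function on the worlds. -/
noncomputable def RCW {Pm : MBParams} (t : NSeq Pm) (U : Set ℝ) (p q : World t) : ℝ :=
  RC t U p.val q.val

/-- The canonical valuation `V_C` of the propositional variables. -/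
def VC {Pm : MBParams} (t : NSeq Pm) (n : ℕ) : Set (World t) :=
  {p | ∃ Γ Δ ts, SubAt t p.val (.node Γ Δ ts) ∧ MBForm.var n ∈ Γ}

/-- `P_C`: the family of all definable sets of worlds of the canonical model. -/
def PC {Pm : MBParams} (t : NSeq Pm) (U : Set ℝ) : Set (Set (World t)) :=
  {X | ∃ A : MBForm Pm, X = MBForm.valR (RCW t U) (VC t) A}


variable {Pm : MBParams}

/-- children length -/
def nslen {Pm : MBParams} : NSeqs Pm → ℕ
  | .nil => 0
  | .cons _ _ ts => nslen ts + 1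

theorem get_nslen : ∀ ts : NSeqs Pm, NSeqs.get ts (nslen ts) = none
  | .nil => rfl
  | .cons _ _ ts => get_nslen ts

theorem sub?_nil (t : NSeq Pm) : t.sub? [] = some t := by
  cases t; rw [NSeq.sub?]

theorem subs?_eq : ∀ (ts : NSeqs Pm) (i : ℕ) (p : List ℕ),
    NSeqs.subs? ts i p = (NSeqs.get ts i).bind (fun x => x.2.sub? p)
  | .nil, i, p => by cases i <;> rw [NSeqs.subs?] <;> rfl
  | .cons _ _ _, 0, p => by rw [NSeqs.subs?]; rfl
  | .cons _ _ ts, n+1, p => by rw [NSeqs.subs?]; exact subs?_eq ts n p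

theorem sub?_cons (Γ Δ : Finset (MBForm Pm)) (ts : NSeqs Pm) (i : ℕ) (p : List ℕ) :
    (NSeq.node Γ Δ ts).sub? (i :: p) = (NSeqs.get ts i).bind (fun x => x.2.sub? p) := by
  rw [NSeq.sub?]; exact subs?_eq ts i p

theorem sub?_of_subAt {t : NSeq Pm} {p u} (h : SubAt t p u) : t.sub? p = some u := by
  induction h with
  | here => exact sub?_nil _
  | there hg _ ih => rw [sub?_cons, hg]; exact ih

theorem subAt_of_sub? : ∀ (p : List ℕ) (t u : NSeq Pm), t.sub? p = some u → SubAt t p u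
  | [], t, u, h => by
      rw [sub?_nil] at h
      cases h; exact SubAt.here t
  | i :: p, .node Γ Δ ts, u, h => by
      rw [sub?_cons] at h
      cases hg : NSeqs.get ts i with
      | none => rw [hg] at h; exact absurd h (by simp)
      | some x =>
          rw [hg, Option.bind_some] at h
          exact SubAt.there (u := x.2) (l := x.1) (by rw [hg]) (subAt_of_sub? p x.2 u h)

theorem sub?_append : ∀ (p q : List ℕ) (t : NSeq Pm),
    t.sub? (p ++ q) = (t.sub? p).bind (fun u => u.sub? q)
  | [], q, t => by rw [sub?_nil]; rfl
  | i :: p', q, .node Γ Δ ts => by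
      rw [List.cons_append, sub?_cons, sub?_cons, Option.bind_assoc]
      cases NSeqs.get ts i with
      | none => rfl
      | some x => simp only [Option.bind_some]; exact sub?_append p' q x.2

theorem get_setSeqs : ∀ (ts : NSeqs Pm) (i : ℕ) (p : List ℕ) (Γ' Δ' : Finset (MBForm Pm)) (j : ℕ),
    NSeqs.get (NSeqs.setSeqs ts i p Γ' Δ') j =
      if j = i then (NSeqs.get ts i).map (fun x => (x.1, x.2.setSeq p Γ' Δ'))
      else NSeqs.get ts j
  | .nil, i, p, Γ', Δ', j => by
      rw [NSeqs.setSeqs]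
      cases j <;> cases i <;> simp [NSeqs.get]
  | .cons l t ts, 0, p, Γ', Δ', 0 => by rw [NSeqs.setSeqs]; simp [NSeqs.get]
  | .cons l t ts, 0, p, Γ', Δ', j+1 => by rw [NSeqs.setSeqs]; simp [NSeqs.get]
  | .cons l t ts, i+1, p, Γ', Δ', 0 => by rw [NSeqs.setSeqs]; simp [NSeqs.get]
  | .cons l t ts, i+1, p, Γ', Δ', j+1 => by
      rw [NSeqs.setSeqs]
      simp only [NSeqs.get, Nat.succ_eq_add_one, Nat.add_right_cancel_iff]
      rw [get_setSeqs ts i p Γ' Δ' j]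

theorem get_snoc : ∀ (ts : NSeqs Pm) (l : MBLab Pm) (u : NSeq Pm) (j : ℕ),
    NSeqs.get (NSeqs.snoc ts l u) j = if j = nslen ts then some (l, u) else NSeqs.get ts j
  | .nil, l, u, 0 => rfl
  | .nil, l, u, j+1 => by simp [NSeqs.snoc, NSeqs.get, nslen]
  | .cons l' t ts, l, u, 0 => by simp [NSeqs.snoc, NSeqs.get, nslen]
  | .cons l' t ts, l, u, j+1 => by
      simp only [NSeqs.snoc, NSeqs.get, nslen, Nat.add_right_cancel_iff]
      exact get_snoc ts l u j

theorem get_addChilds : ∀ (ts : NSeqs Pm) (i : ℕ) (p : List ℕ) (l : MBLab Pm) (u : NSeq Pm) (j : ℕ),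
    NSeqs.get (NSeqs.addChilds ts i p l u) j =
      if j = i then (NSeqs.get ts i).map (fun x => (x.1, x.2.addChild p l u))
      else NSeqs.get ts j
  | .nil, i, p, l, u, j => by
      rw [NSeqs.addChilds]
      cases j <;> cases i <;> simp [NSeqs.get]
  | .cons l' t ts, 0, p, l, u, 0 => by rw [NSeqs.addChilds]; simp [NSeqs.get]
  | .cons l' t ts, 0, p, l, u, j+1 => by rw [NSeqs.addChilds]; simp [NSeqs.get]
  | .cons l' t ts, i+1, p, l, u, 0 => by rw [NSeqs.addChilds]; simp [NSeqs.get]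
  | .cons l' t ts, i+1, p, l, u, j+1 => by
      rw [NSeqs.addChilds]
      simp only [NSeqs.get, Nat.succ_eq_add_one, Nat.add_right_cancel_iff]
      rw [get_addChilds ts i p l u j]

/-- first component of a node -/
def nsΓ {Pm : MBParams} : NSeq Pm → Finset (MBForm Pm) | .node Γ _ _ => Γ
def nsΔ {Pm : MBParams} : NSeq Pm → Finset (MBForm Pm) | .node _ Δ _ => Δ
def nsTs {Pm : MBParams} : NSeq Pm → NSeqs Pm | .node _ _ ts => ts

/-- The sequent at a node address. -/
def seq? (t : NSeq Pm) (p : List ℕ) : Option (Finset (MBForm Pm) × Finset (MBForm Pm)) :=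
  (t.sub? p).map (fun u => (nsΓ u, nsΔ u))

theorem seq?_eq_some {t : NSeq Pm} {p Γ Δ ts} (h : t.sub? p = some (.node Γ Δ ts)) :
    seq? t p = some (Γ, Δ) := by rw [seq?, h]; rfl

theorem seq?_cases {t : NSeq Pm} {p : List ℕ} {x} (h : seq? t p = some x) :
    ∃ ts, t.sub? p = some (.node x.1 x.2 ts) := by
  rw [seq?] at h
  cases hs : t.sub? p with
  | none => rw [hs] at h; exact absurd h (by simp)
  | some u =>
      cases u with
      | node Γ Δ ts =>
          rw [hs, Option.map_some] at h
          cases h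
          exact ⟨ts, by simpa [nsΓ, nsΔ] using hs⟩

theorem seq?_cons (Γ Δ : Finset (MBForm Pm)) (ts : NSeqs Pm) (i : ℕ) (p : List ℕ) :
    seq? (NSeq.node Γ Δ ts) (i :: p) = (NSeqs.get ts i).bind (fun x => seq? x.2 p) := by
  rw [seq?, sub?_cons]
  cases NSeqs.get ts i <;> rfl

theorem labelAt_eq (t : NSeq Pm) (p : List ℕ) (i : ℕ) :
    labelAt t p i = (t.sub? p).bind (fun u => (NSeqs.get (nsTs u) i).map Prod.fst) := by
  cases hs : t.sub? p with
  | none => rw [labelAt, hs]; rfl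
  | some u => cases u with
    | node Γ Δ ts => rw [labelAt, hs]; rfl

theorem labelAt_nil (Γ Δ : Finset (MBForm Pm)) (ts : NSeqs Pm) (i : ℕ) :
    labelAt (NSeq.node Γ Δ ts) [] i = (NSeqs.get ts i).map Prod.fst := by
  rw [labelAt_eq, sub?_nil]; rfl

theorem labelAt_cons (Γ Δ : Finset (MBForm Pm)) (ts : NSeqs Pm) (j : ℕ) (q : List ℕ) (i : ℕ) :
    labelAt (NSeq.node Γ Δ ts) (j :: q) i =
      (NSeqs.get ts j).bind (fun x => labelAt x.2 q i) := by
  rw [labelAt_eq, sub?_cons, Option.bind_assoc]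
  cases NSeqs.get ts j with
  | none => rfl
  | some x => simp only [Option.bind_some]; rw [labelAt_eq]

theorem labelAt_of {t : NSeq Pm} {p Γ Δ ts i l u} (h : t.sub? p = some (.node Γ Δ ts))
    (hg : NSeqs.get ts i = some (l, u)) : labelAt t p i = some l := by
  rw [labelAt_eq, h, Option.bind_some]
  show (NSeqs.get ts i).map Prod.fst = some l
  rw [hg]; rfl

theorem seq?_setSeq : ∀ (q p : List ℕ) (t : NSeq Pm) {Γ Δ ts} (Γ' Δ' : Finset (MBForm Pm)),
    t.sub? p = some (.node Γ Δ ts) →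
    seq? (t.setSeq p Γ' Δ') q = if q = p then some (Γ', Δ') else seq? t q
  | [], [], t, Γ, Δ, ts, Γ', Δ', h => by
      rw [sub?_nil] at h; cases h
      rw [NSeq.setSeq, if_pos rfl]
      exact seq?_eq_some (sub?_nil _)
  | [], i :: p', .node Γ₀ Δ₀ ts₀, Γ, Δ, ts, Γ', Δ', h => by
      rw [NSeq.setSeq, if_neg (show ¬ (([]:List ℕ) = i :: p') from by simp)]
      rw [seq?_eq_some (sub?_nil _), seq?_eq_some (sub?_nil _)]
  | j :: q', [], t, Γ, Δ, ts, Γ', Δ', h => by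
      rw [sub?_nil] at h; cases h
      rw [NSeq.setSeq, if_neg (show ¬ (j :: q' = ([]:List ℕ)) from by simp), seq?_cons, seq?_cons]
  | j :: q', i :: p', .node Γ₀ Δ₀ ts₀, Γ, Δ, ts, Γ', Δ', h => by
      rw [NSeq.setSeq, seq?_cons, seq?_cons, get_setSeqs]
      rw [sub?_cons] at h
      by_cases hj : j = i
      · subst hj
        rw [if_pos rfl]
        cases hg : NSeqs.get ts₀ j with
        | none => rw [hg] at h; exact absurd h (by simp)
        | some x =>
            rw [hg, Option.bind_some] at h
            simp only [Option.map_some, Option.bind_some]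
            show seq? (x.2.setSeq p' Γ' Δ') q' = _
            rw [seq?_setSeq q' p' x.2 Γ' Δ' h]
            simp only [List.cons.injEq, true_and]
      · rw [if_neg hj, if_neg (show ¬ (j :: q' = i :: p') from by simp [hj])]

theorem labelAt_setSeq : ∀ (q p : List ℕ) (t : NSeq Pm) {Γ Δ ts}
    (Γ' Δ' : Finset (MBForm Pm)) (i : ℕ),
    t.sub? p = some (.node Γ Δ ts) →
    labelAt (t.setSeq p Γ' Δ') q i = labelAt t q i
  | [], [], t, Γ, Δ, ts, Γ', Δ', i, h => by
      rw [sub?_nil] at h; cases h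
      rw [NSeq.setSeq, labelAt_nil, labelAt_nil]
  | [], j :: p', .node Γ₀ Δ₀ ts₀, Γ, Δ, ts, Γ', Δ', i, h => by
      rw [NSeq.setSeq, labelAt_nil, labelAt_nil, get_setSeqs]
      by_cases hij : i = j
      · subst hij
        rw [if_pos rfl, Option.map_map]
        congr 1
      · rw [if_neg hij]
  | j :: q', [], t, Γ, Δ, ts, Γ', Δ', i, h => by
      rw [sub?_nil] at h; cases h
      rw [NSeq.setSeq, labelAt_cons, labelAt_cons]
  | j :: q', k :: p', .node Γ₀ Δ₀ ts₀, Γ, Δ, ts, Γ', Δ', i, h => by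
      rw [NSeq.setSeq, labelAt_cons, labelAt_cons, get_setSeqs]
      rw [sub?_cons] at h
      by_cases hj : j = k
      · subst hj
        rw [if_pos rfl]
        cases hg : NSeqs.get ts₀ j with
        | none => rw [hg] at h; exact absurd h (by simp)
        | some x =>
            rw [hg, Option.bind_some] at h
            simp only [Option.map_some, Option.bind_some]
            exact labelAt_setSeq q' p' x.2 Γ' Δ' i h
      · rw [if_neg hj]

theorem seq?_addChild : ∀ (q p : List ℕ) (t : NSeq Pm) {Γ Δ ts} (l : MBLab Pm)
    (Γa Δa : Finset (MBForm Pm)),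
    t.sub? p = some (.node Γ Δ ts) →
    seq? (t.addChild p l (.node Γa Δa .nil)) q =
      if q = p ++ [nslen ts] then some (Γa, Δa) else seq? t q
  | [], [], t, Γ, Δ, ts, l, Γa, Δa, h => by
      rw [sub?_nil] at h; cases h
      rw [NSeq.addChild, if_neg (show ¬ (([]:List ℕ) = [] ++ [nslen ts]) from by simp)]
      rw [seq?_eq_some (sub?_nil _), seq?_eq_some (sub?_nil _)]
  | [], i :: p', .node Γ₀ Δ₀ ts₀, Γ, Δ, ts, l, Γa, Δa, h => by
      rw [NSeq.addChild,
        if_neg (show ¬ (([]:List ℕ) = (i :: p') ++ [nslen ts]) from by simp)]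
      rw [seq?_eq_some (sub?_nil _), seq?_eq_some (sub?_nil _)]
  | j :: q', [], t, Γ, Δ, ts, l, Γa, Δa, h => by
      rw [sub?_nil] at h; cases h
      rw [NSeq.addChild, seq?_cons, seq?_cons, get_snoc, List.nil_append]
      by_cases hj : j = nslen ts
      · subst hj
        rw [if_pos rfl, Option.bind_some, get_nslen, Option.bind_none]
        cases q' with
        | nil =>
            rw [if_pos rfl]
            exact seq?_eq_some (sub?_nil _)
        | cons j' q'' =>
            rw [if_neg (show ¬ (nslen ts :: j' :: q'' = [nslen ts]) from by simp), seq?_cons]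
            simp [NSeqs.get]
      · rw [if_neg hj, if_neg (show ¬ (j :: q' = [nslen ts]) from by simp [hj])]
  | j :: q', i :: p', .node Γ₀ Δ₀ ts₀, Γ, Δ, ts, l, Γa, Δa, h => by
      rw [NSeq.addChild, seq?_cons, seq?_cons, get_addChilds, List.cons_append]
      rw [sub?_cons] at h
      by_cases hj : j = i
      · subst hj
        rw [if_pos rfl]
        cases hg : NSeqs.get ts₀ j with
        | none => rw [hg] at h; exact absurd h (by simp)
        | some x =>
            rw [hg, Option.bind_some] at h
            simp only [Option.map_some, Option.bind_some]
            show seq? (x.2.addChild p' l (.node Γa Δa .nil)) q' = _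
            rw [seq?_addChild q' p' x.2 l Γa Δa h]
            simp only [List.cons.injEq, true_and]
      · rw [if_neg hj,
          if_neg (show ¬ (j :: q' = i :: (p' ++ [nslen ts])) from by simp [hj])]

theorem labelAt_addChild : ∀ (q p : List ℕ) (t : NSeq Pm) {Γ Δ ts} (l : MBLab Pm)
    (Γa Δa : Finset (MBForm Pm)) (i : ℕ),
    t.sub? p = some (.node Γ Δ ts) →
    labelAt (t.addChild p l (.node Γa Δa .nil)) q i =
      if q = p ∧ i = nslen ts then some l else labelAt t q i
  | [], [], t, Γ, Δ, ts, l, Γa, Δa, i, h => by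
      rw [sub?_nil] at h; cases h
      rw [NSeq.addChild, labelAt_nil, labelAt_nil, get_snoc]
      by_cases hi : i = nslen ts
      · rw [if_pos hi, if_pos ⟨rfl, hi⟩]; rfl
      · rw [if_neg hi, if_neg (show ¬ (([]:List ℕ) = [] ∧ i = nslen ts) from by simp [hi])]
  | [], j :: p', .node Γ₀ Δ₀ ts₀, Γ, Δ, ts, l, Γa, Δa, i, h => by
      rw [NSeq.addChild, labelAt_nil, labelAt_nil,
        if_neg (show ¬ (([]:List ℕ) = j :: p' ∧ i = nslen ts) from by simp), get_addChilds]
      by_cases hij : i = j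
      · subst hij
        rw [if_pos rfl, Option.map_map]
        congr 1
      · rw [if_neg hij]
  | j :: q', [], t, Γ, Δ, ts, l, Γa, Δa, i, h => by
      rw [sub?_nil] at h; cases h
      rw [NSeq.addChild, labelAt_cons, labelAt_cons,
        if_neg (show ¬ (j :: q' = ([]:List ℕ) ∧ i = nslen ts) from by simp), get_snoc]
      by_cases hj : j = nslen ts
      · subst hj
        rw [if_pos rfl, Option.bind_some, get_nslen, Option.bind_none]
        cases q' with
        | nil => rw [labelAt_nil]; simp [NSeqs.get]
        | cons j' q'' => rw [labelAt_cons]; simp [NSeqs.get]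
      · rw [if_neg hj]
  | j :: q', k :: p', .node Γ₀ Δ₀ ts₀, Γ, Δ, ts, l, Γa, Δa, i, h => by
      rw [NSeq.addChild, labelAt_cons, labelAt_cons, get_addChilds]
      rw [sub?_cons] at h
      by_cases hj : j = k
      · subst hj
        rw [if_pos rfl]
        cases hg : NSeqs.get ts₀ j with
        | none => rw [hg] at h; exact absurd h (by simp)
        | some x =>
            rw [hg, Option.bind_some] at h
            simp only [Option.map_some, Option.bind_some]
            rw [labelAt_addChild q' p' x.2 l Γa Δa i h]
            simp only [List.cons.injEq, true_and]
      · rw [if_neg hj,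
          if_neg (show ¬ (j :: q' = k :: p' ∧ i = nslen ts) from by simp [hj])]

/-- labelAt-based reformulation of `IsEmb`. -/
def Emb' (M : MBRealization Pm) (t : NSeq Pm) (E : List ℕ → M.F.S) : Prop :=
  ∀ p i l, labelAt t p i = some l →
    (l.d = Side.c → l.α ≤ M.F.R (E p) (E (p ++ [i]))) ∧
    (l.d = Side.o → l.α < M.F.R (E p) (E (p ++ [i])))

theorem isEmb_iff {M : MBRealization Pm} {t : NSeq Pm} {E : List ℕ → M.F.S} :
    IsEmb M t E ↔ Emb' M t E := by
  constructor
  · intro h p i l hl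
    rw [labelAt_eq] at hl
    cases hs : t.sub? p with
    | none => rw [hs] at hl; exact absurd hl (by simp)
    | some u =>
        cases u with
        | node Γ Δ ts =>
            rw [hs, Option.bind_some] at hl
            cases hg : NSeqs.get (nsTs (NSeq.node Γ Δ ts)) i with
            | none => rw [hg] at hl; exact absurd hl (by simp)
            | some x =>
                rw [hg, Option.map_some] at hl
                cases hl
                exact h p Γ Δ ts i x.1 x.2 (subAt_of_sub? _ _ _ hs)
                  (by rw [show x.1 = (x.1, x.2).1 from rfl]; exact hg)
  · intro h p Γ Δ ts i l u hs hg
    exact h p i l (labelAt_of (sub?_of_subAt hs) hg)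

/-- The sequent `(Γ, Δ)` is refuted at world `E q`. -/
def NodeOK (M : MBRealization Pm) (E : List ℕ → M.F.S) (q : List ℕ)
    (Γ Δ : Finset (MBForm Pm)) : Prop :=
  (∀ A ∈ Γ, E q ∈ M.val A) ∧ (∀ A ∈ Δ, E q ∉ M.val A)

theorem NodeOK.mono {M : MBRealization Pm} {E : List ℕ → M.F.S} {q : List ℕ}
    {Γ Δ Γ' Δ' : Finset (MBForm Pm)} (h : NodeOK M E q Γ Δ) (hΓ : Γ' ⊆ Γ) (hΔ : Δ' ⊆ Δ) :
    NodeOK M E q Γ' Δ' :=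
  ⟨fun A hA => h.1 A (hΓ hA), fun A hA => h.2 A (hΔ hA)⟩

/-- seq?-based reformulation of `FalseUnder`. -/
def FU' (M : MBRealization Pm) (t : NSeq Pm) (E : List ℕ → M.F.S) : Prop :=
  ∀ q Γq Δq, seq? t q = some (Γq, Δq) → NodeOK M E q Γq Δq

theorem falseUnder_iff {M : MBRealization Pm} {t : NSeq Pm} {E : List ℕ → M.F.S} :
    FalseUnder M t E ↔ FU' M t E := by
  constructor
  · intro h q Γq Δq hq
    obtain ⟨ts, hs⟩ := seq?_cases hq
    exact h q Γq Δq ts (subAt_of_sub? _ _ _ hs)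
  · intro h p Γ Δ ts hs
    exact h p Γ Δ (seq?_eq_some (sub?_of_subAt hs))

theorem val_neg {M : MBRealization Pm} (A : MBForm Pm) :
    M.val (MBForm.neg A) = (M.val A)ᶜ := rfl

theorem val_conj {M : MBRealization Pm} (A B : MBForm Pm) :
    M.val (MBForm.conj A B) = M.val A ∩ M.val B := rfl

theorem mem_val_boxc {M : MBRealization Pm} {α : Pm.J} {A : MBForm Pm} {s : M.F.S} :
    s ∈ M.val (MBForm.boxc α A) ↔ ∀ u, (α : ℝ) ≤ M.F.R s u → u ∈ M.val A := Iff.rfl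

theorem mem_val_boxo {M : MBRealization Pm} {α : Pm.J} {A : MBForm Pm} {s : M.F.S} :
    s ∈ M.val (MBForm.boxo α A) ↔ ∀ u, (α : ℝ) < M.F.R s u → u ∈ M.val A := Iff.rfl

/-- Generic soundness step for rules whose conclusion is obtained by `setSeq`
at node `p` and whose (relevant) premise is obtained by `setSeq` at node `r`. -/
theorem step_core {t : NSeq Pm} {p r : List ℕ} {Γ Δ ts Γr Δr tsr : _} {Γc Δc Γp Δp : Finset (MBForm Pm)}
    (h : t.sub? p = some (.node Γ Δ ts))
    (hr : t.sub? r = some (.node Γr Δr tsr))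
    (hΓ : Γ ⊆ Γc) (hΔ : Δ ⊆ Δc)
    (hval : NSValid (t.setSeq r Γp Δp))
    (sem : ∀ (M : MBRealization Pm) (E : List ℕ → M.F.S), Emb' M t E →
      NodeOK M E p Γc Δc →
      (∀ q Γq Δq, seq? t q = some (Γq, Δq) → q ≠ p → NodeOK M E q Γq Δq) →
      NodeOK M E r Γp Δp) :
    NSValid (t.setSeq p Γc Δc) := by
  intro M E hemb hf
  have hE : Emb' M t E := by
    intro q i l hl
    exact (isEmb_iff.1 hemb) q i l (by rw [labelAt_setSeq q p t Γc Δc i h]; exact hl)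
  have hfC : FU' M (t.setSeq p Γc Δc) E := falseUnder_iff.1 hf
  have hNodeP : NodeOK M E p Γc Δc :=
    hfC p Γc Δc (by rw [seq?_setSeq p p t Γc Δc h, if_pos rfl])
  have hOther : ∀ q Γq Δq, seq? t q = some (Γq, Δq) → q ≠ p → NodeOK M E q Γq Δq := by
    intro q Γq Δq hq hne
    exact hfC q Γq Δq (by rw [seq?_setSeq q p t Γc Δc h, if_neg hne]; exact hq)
  have hsem := sem M E hE hNodeP hOther
  refine hval M E ?_ ?_
  · refine isEmb_iff.2 ?_
    intro q i l hl
    rw [labelAt_setSeq q r t Γp Δp i hr] at hl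
    exact hE q i l hl
  · refine falseUnder_iff.2 ?_
    intro q Γq Δq hq
    rw [seq?_setSeq q r t Γp Δp hr] at hq
    by_cases hqr : q = r
    · rw [if_pos hqr] at hq
      cases hq
      rw [hqr]
      exact hsem
    · rw [if_neg hqr] at hq
      by_cases hqp : q = p
      · subst hqp
        rw [seq?_eq_some h] at hq
        cases hq
        exact hNodeP.mono hΓ hΔ
      · exact hOther q Γq Δq hq hqp

theorem NodeOK.congr {M : MBRealization Pm} {E E' : List ℕ → M.F.S} {q : List ℕ}
    {Γ Δ : Finset (MBForm Pm)} (hEq : E' q = E q) (h : NodeOK M E q Γ Δ) :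
    NodeOK M E' q Γ Δ :=
  ⟨fun B hB => by rw [hEq]; exact h.1 B hB, fun B hB => by rw [hEq]; exact h.2 B hB⟩

theorem append_singleton_inj {p q : List ℕ} {i j : ℕ} (h : p ++ [i] = q ++ [j]) :
    p = q ∧ i = j := by
  have hlen : p.length = q.length := by
    have := congrArg List.length h
    simpa using this
  obtain ⟨h1, h2⟩ := List.append_inj h hlen
  exact ⟨h1, by injection h2⟩

theorem ne_append_singleton (p : List ℕ) (i : ℕ) : p ≠ p ++ [i] := by simp

/-- Soundness step for weakening-style rules: conclusion `setSeq p Γc Δc`,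
premise `t` itself. -/
theorem step_coreT {t : NSeq Pm} {p : List ℕ} {Γ Δ ts} {Γc Δc : Finset (MBForm Pm)}
    (h : t.sub? p = some (.node Γ Δ ts))
    (hΓ : Γ ⊆ Γc) (hΔ : Δ ⊆ Δc)
    (hval : NSValid t) :
    NSValid (t.setSeq p Γc Δc) := by
  intro M E hemb hf
  have hE : Emb' M t E := by
    intro q i l hl
    exact (isEmb_iff.1 hemb) q i l (by rw [labelAt_setSeq q p t Γc Δc i h]; exact hl)
  have hfC : FU' M (t.setSeq p Γc Δc) E := falseUnder_iff.1 hf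
  have hNodeP : NodeOK M E p Γc Δc :=
    hfC p Γc Δc (by rw [seq?_setSeq p p t Γc Δc h, if_pos rfl])
  refine hval M E (isEmb_iff.2 hE) (falseUnder_iff.2 ?_)
  intro q Γq Δq hq
  by_cases hqp : q = p
  · subst hqp
    rw [seq?_eq_some h] at hq
    cases hq
    exact hNodeP.mono hΓ hΔ
  · exact hfC q Γq Δq (by rw [seq?_setSeq q p t Γc Δc h, if_neg hqp]; exact hq)

/-- Soundness step with two possible premises (for `(∧R)`). -/
theorem step_core2 {t : NSeq Pm} {p : List ℕ} {Γ Δ ts}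
    {Γc Δc Γp₁ Δp₁ Γp₂ Δp₂ : Finset (MBForm Pm)}
    (h : t.sub? p = some (.node Γ Δ ts))
    (hΓ : Γ ⊆ Γc) (hΔ : Δ ⊆ Δc)
    (hval₁ : NSValid (t.setSeq p Γp₁ Δp₁))
    (hval₂ : NSValid (t.setSeq p Γp₂ Δp₂))
    (sem : ∀ (M : MBRealization Pm) (E : List ℕ → M.F.S), Emb' M t E →
      NodeOK M E p Γc Δc →
      (NodeOK M E p Γp₁ Δp₁ ∨ NodeOK M E p Γp₂ Δp₂)) :
    NSValid (t.setSeq p Γc Δc) := by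
  intro M E hemb hf
  have hE : Emb' M t E := by
    intro q i l hl
    exact (isEmb_iff.1 hemb) q i l (by rw [labelAt_setSeq q p t Γc Δc i h]; exact hl)
  have hfC : FU' M (t.setSeq p Γc Δc) E := falseUnder_iff.1 hf
  have hNodeP : NodeOK M E p Γc Δc :=
    hfC p Γc Δc (by rw [seq?_setSeq p p t Γc Δc h, if_pos rfl])
  have hOther : ∀ q Γq Δq, seq? t q = some (Γq, Δq) → q ≠ p → NodeOK M E q Γq Δq := by
    intro q Γq Δq hq hne
    exact hfC q Γq Δq (by rw [seq?_setSeq q p t Γc Δc h, if_neg hne]; exact hq)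
  rcases sem M E hE hNodeP with hsem | hsem
  · refine hval₁ M E (isEmb_iff.2 ?_) (falseUnder_iff.2 ?_)
    · intro q i l hl
      rw [labelAt_setSeq q p t Γp₁ Δp₁ i h] at hl
      exact hE q i l hl
    · intro q Γq Δq hq
      rw [seq?_setSeq q p t Γp₁ Δp₁ h] at hq
      by_cases hqp : q = p
      · rw [if_pos hqp] at hq; cases hq; rw [hqp]; exact hsem
      · rw [if_neg hqp] at hq; exact hOther q Γq Δq hq hqp
  · refine hval₂ M E (isEmb_iff.2 ?_) (falseUnder_iff.2 ?_)
    · intro q i l hl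
      rw [labelAt_setSeq q p t Γp₂ Δp₂ i h] at hl
      exact hE q i l hl
    · intro q Γq Δq hq
      rw [seq?_setSeq q p t Γp₂ Δp₂ h] at hq
      by_cases hqp : q = p
      · rw [if_pos hqp] at hq; cases hq; rw [hqp]; exact hsem
      · rw [if_neg hqp] at hq; exact hOther q Γq Δq hq hqp

theorem mkBox_true_child {M : MBRealization Pm} {s u : M.F.S} {α : Pm.J} {d : Side}
    {l : MBLab Pm} {A : MBForm Pm}
    (hpleq : pleq (α:ℝ) d l.α l.d)
    (hc : l.d = Side.c → l.α ≤ M.F.R s u)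
    (ho : l.d = Side.o → l.α < M.F.R s u)
    (hbox : s ∈ M.val (mkBox d α A)) : u ∈ M.val A := by
  cases d with
  | c =>
      refine mem_val_boxc.1 hbox u ?_
      cases hld : l.d
      · rw [hld] at hpleq
        have h1 : (α:ℝ) ≤ l.α := hpleq
        exact le_trans h1 (hc hld)
      · rw [hld] at hpleq
        have h1 : (α:ℝ) ≤ l.α := hpleq
        exact le_trans h1 (le_of_lt (ho hld))
  | o =>
      refine mem_val_boxo.1 hbox u ?_
      cases hld : l.d
      · rw [hld] at hpleq
        have h1 : (α:ℝ) < l.α := hpleq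
        exact lt_of_lt_of_le h1 (hc hld)
      · rw [hld] at hpleq
        have h1 : (α:ℝ) ≤ l.α := hpleq
        exact lt_of_le_of_lt h1 (ho hld)

theorem mkBox_true_self {M : MBRealization Pm} {s : M.F.S} {α : Pm.J} {d : Side}
    {A : MBForm Pm} (hne : ¬((α:ℝ) = 1 ∧ d = Side.o))
    (hbox : s ∈ M.val (mkBox d α A)) : s ∈ M.val A := by
  have hR : M.F.R s s = 1 := (M.F.eq_one_iff s s).2 rfl
  cases d with
  | c => exact mem_val_boxc.1 hbox s (by rw [hR]; exact (Pm.subI α.2).2)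
  | o =>
      refine mem_val_boxo.1 hbox s ?_
      rw [hR]
      exact lt_of_le_of_ne (Pm.subI α.2).2 (fun e => hne ⟨e, rfl⟩)

theorem soundness_aux {cut : Bool} {t : NSeq Pm} (h : Provable cut t) : NSValid t := by
  induction h with
  | @axId cut t p Γ Δ ts A hsub hl hr =>
      intro M E _ hf
      obtain ⟨h1, h2⟩ := hf p Γ Δ ts hsub
      exact h2 A hr (h1 A hl)
  | @axTop cut t p Γ Δ ts hsub hmem =>
      intro M E _ hf
      exact (hf p Γ Δ ts hsub).2 _ hmem trivial
  | @axBot cut t p Γ Δ ts hsub hmem =>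
      intro M E _ hf
      exact absurd ((hf p Γ Δ ts hsub).1 _ hmem) (Set.notMem_empty _)
  | @axBoxO1 cut t p Γ Δ ts A hsub hmem =>
      intro M E _ hf
      refine (hf p Γ Δ ts hsub).2 _ hmem ?_
      refine mem_val_boxo.2 (fun u hu => absurd hu (not_lt.2 ?_))
      exact (M.F.mem_Icc _ u).2
  | @cutR t p Γ Δ ts A hsub h1 h2 ih1 ih2 =>
      intro M E hemb hf
      have h := sub?_of_subAt hsub
      have hE : Emb' M _ E := isEmb_iff.1 hemb
      have hF : FU' M _ E := falseUnder_iff.1 hf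
      have hP : NodeOK M E p Γ Δ := hF p Γ Δ (seq?_eq_some h)
      by_cases hA : E p ∈ M.val A
      · refine ih2 M E (isEmb_iff.2 ?_) (falseUnder_iff.2 ?_)
        · intro q i l hl
          rw [labelAt_setSeq q p _ _ _ i h] at hl
          exact hE q i l hl
        · intro q Γq Δq hq
          rw [seq?_setSeq q p _ _ _ h] at hq
          by_cases hqp : q = p
          · rw [if_pos hqp] at hq; cases hq; subst hqp
            exact ⟨fun B hB => (Finset.mem_insert.1 hB).elim
              (fun e => by rw [e]; exact hA) (hP.1 B), hP.2⟩
          · rw [if_neg hqp] at hq; exact hF q Γq Δq hq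
      · refine ih1 M E (isEmb_iff.2 ?_) (falseUnder_iff.2 ?_)
        · intro q i l hl
          rw [labelAt_setSeq q p _ _ _ i h] at hl
          exact hE q i l hl
        · intro q Γq Δq hq
          rw [seq?_setSeq q p _ _ _ h] at hq
          by_cases hqp : q = p
          · rw [if_pos hqp] at hq; cases hq; subst hqp
            exact ⟨hP.1, fun B hB => (Finset.mem_insert.1 hB).elim
              (fun e => by rw [e]; exact hA) (hP.2 B)⟩
          · rw [if_neg hqp] at hq; exact hF q Γq Δq hq
  | @wL cut t p Γ Δ ts A hsub hprem ih =>
      exact step_coreT (sub?_of_subAt hsub) (Finset.subset_insert _ _) (Finset.Subset.refl _) ih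
  | @wR cut t p Γ Δ ts A hsub hprem ih =>
      exact step_coreT (sub?_of_subAt hsub) (Finset.Subset.refl _) (Finset.subset_insert _ _) ih
  | @negL cut t p Γ Δ ts A hsub hprem ih =>
      have h := sub?_of_subAt hsub
      refine step_core h h (Finset.subset_insert _ _) (Finset.Subset.refl _) ih ?_
      intro M E _ hC _
      refine ⟨fun B hB => hC.1 B (Finset.mem_insert_of_mem hB), fun B hB => ?_⟩
      rcases Finset.mem_insert.1 hB with e | hBΔ
      · subst e
        exact hC.1 _ (Finset.mem_insert_self _ _)
      · exact hC.2 B hBΔ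
  | @negR cut t p Γ Δ ts A hsub hprem ih =>
      have h := sub?_of_subAt hsub
      refine step_core h h (Finset.Subset.refl _) (Finset.subset_insert _ _) ih ?_
      intro M E _ hC _
      refine ⟨fun B hB => ?_, fun B hB => hC.2 B (Finset.mem_insert_of_mem hB)⟩
      rcases Finset.mem_insert.1 hB with e | hBΓ
      · subst e
        have := hC.2 _ (Finset.mem_insert_self (MBForm.neg B) Δ)
        rw [val_neg] at this
        simpa using this
      · exact hC.1 B hBΓ
  | @andL cut t p Γ Δ ts A B hsub hprem ih =>
      have h := sub?_of_subAt hsub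
      refine step_core h h (Finset.subset_insert _ _) (Finset.Subset.refl _) ih ?_
      intro M E _ hC _
      have hAB : E p ∈ M.val (MBForm.conj A B) := hC.1 _ (Finset.mem_insert_self _ _)
      rw [val_conj] at hAB
      refine ⟨fun C hC' => ?_, hC.2⟩
      rcases Finset.mem_insert.1 hC' with e | hC' 
      · subst e; exact hAB.1
      rcases Finset.mem_insert.1 hC' with e | hC'
      · subst e; exact hAB.2
      · exact hC.1 C (Finset.mem_insert_of_mem hC')
  | @andR cut t p Γ Δ ts A B hsub h1 h2 ih1 ih2 =>
      have h := sub?_of_subAt hsub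
      refine step_core2 h (Finset.Subset.refl _) (Finset.subset_insert _ _) ih1 ih2 ?_
      intro M E _ hC
      have hAB : E p ∉ M.val (MBForm.conj A B) := hC.2 _ (Finset.mem_insert_self _ _)
      rw [val_conj] at hAB
      by_cases hA : E p ∈ M.val A
      · right
        refine ⟨hC.1, fun C hC' => ?_⟩
        rcases Finset.mem_insert.1 hC' with e | hC'
        · subst e; exact fun hB => hAB ⟨hA, hB⟩
        · exact hC.2 C (Finset.mem_insert_of_mem hC')
      · left
        refine ⟨hC.1, fun C hC' => ?_⟩
        rcases Finset.mem_insert.1 hC' with e | hC'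
        · subst e; exact hA
        · exact hC.2 C (Finset.mem_insert_of_mem hC')
  | @boxL cut t p Γ Δ ts i l u Γ' Δ' ts' A α d hsub hget hsub' hpleq hprem ih =>
      have h := sub?_of_subAt hsub
      have h' := sub?_of_subAt hsub'
      refine step_core h h' (Finset.subset_insert _ _) (Finset.Subset.refl _) ih ?_
      intro M E hE hC hOther
      have hedge := hE p i l (labelAt_of h hget)
      have hbox : E p ∈ M.val (mkBox d α A) := hC.1 _ (Finset.mem_insert_self _ _)
      have hA : E (p ++ [i]) ∈ M.val A :=
        mkBox_true_child hpleq hedge.1 hedge.2 hbox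
      have hne : p ++ [i] ≠ p := fun e => ne_append_singleton p i e.symm
      have hO := hOther (p ++ [i]) Γ' Δ' (seq?_eq_some h') hne
      refine ⟨fun B hB => ?_, hO.2⟩
      rcases Finset.mem_insert.1 hB with e | hB
      · subst e; exact hA
      · exact hO.1 B hB
  | @boxLsym cut t p Γ Δ ts i l u Γ' Δ' ts' A α d hsub hget hsub' hpleq hprem ih =>
      have h := sub?_of_subAt hsub
      have h' := sub?_of_subAt hsub'
      refine step_core h' h (Finset.subset_insert _ _) (Finset.Subset.refl _) ih ?_
      intro M E hE hC hOther
      have hedge := hE p i l (labelAt_of h hget)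
      have hbox : E (p ++ [i]) ∈ M.val (mkBox d α A) := hC.1 _ (Finset.mem_insert_self _ _)
      have hA : E p ∈ M.val A := by
        refine mkBox_true_child hpleq ?_ ?_ hbox
        · intro hld
          rw [M.F.symm]
          exact hedge.1 hld
        · intro hld
          rw [M.F.symm]
          exact hedge.2 hld
      have hne : p ≠ p ++ [i] := ne_append_singleton p i
      have hO := hOther p Γ Δ (seq?_eq_some h) hne
      refine ⟨fun B hB => ?_, hO.2⟩
      rcases Finset.mem_insert.1 hB with e | hB
      · subst e; exact hA
      · exact hO.1 B hB
  | @boxLself cut t p Γ Δ ts A α d hsub hne hprem ih =>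
      have h := sub?_of_subAt hsub
      refine step_core h h (Finset.subset_insert _ _) (Finset.Subset.refl _) ih ?_
      intro M E _ hC _
      have hbox : E p ∈ M.val (mkBox d α A) := hC.1 _ (Finset.mem_insert_self _ _)
      have hA : E p ∈ M.val A := mkBox_true_self hne hbox
      refine ⟨fun B hB => ?_, hC.2⟩
      rcases Finset.mem_insert.1 hB with e | hB
      · subst e; exact hA
      · exact hC.1 B (Finset.mem_insert_of_mem hB)
  | @boxC0 cut t p Γ Δ ts q Γ'' Δ'' ts'' A hsub hsub'' hprem ih =>
      have hp := sub?_of_subAt hsub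
      have hq := sub?_of_subAt hsub''
      refine step_core hq hp (Finset.subset_insert _ _) (Finset.Subset.refl _) ih ?_
      intro M E _ hC hOther
      have hbox : E q ∈ M.val (MBForm.boxc ⟨0, Pm.zero_mem⟩ A) :=
        hC.1 _ (Finset.mem_insert_self _ _)
      have hA : E p ∈ M.val A := mem_val_boxc.1 hbox (E p) (M.F.mem_Icc (E q) (E p)).1
      by_cases hpq : p = q
      · subst hpq
        have e : Γ = Γ'' ∧ Δ = Δ'' := by
          rw [hp] at hq
          cases hq
          exact ⟨rfl, rfl⟩
        refine ⟨fun B hB => ?_, ?_⟩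
        · rcases Finset.mem_insert.1 hB with hB | hB
          · subst hB; exact hA
          · exact hC.1 B (Finset.mem_insert_of_mem (e.1 ▸ hB))
        · intro B hB
          exact hC.2 B (e.2 ▸ hB)
      · have hO := hOther p Γ Δ (seq?_eq_some hp) hpq
        refine ⟨fun B hB => ?_, hO.2⟩
        rcases Finset.mem_insert.1 hB with hB | hB
        · subst hB; exact hA
        · exact hO.1 B hB
  | @boxRself cut t p Γ Δ ts A hsub hprem ih =>
      have h := sub?_of_subAt hsub
      refine step_core h h (Finset.Subset.refl _) (Finset.subset_insert _ _) ih ?_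
      intro M E _ hC _
      have hbox : E p ∉ M.val (MBForm.boxc ⟨1, Pm.one_mem⟩ A) :=
        hC.2 _ (Finset.mem_insert_self _ _)
      have hA : E p ∉ M.val A := by
        intro hA
        refine hbox (mem_val_boxc.2 (fun u hu => ?_))
        have hRu : M.F.R (E p) u = 1 := le_antisymm (M.F.mem_Icc _ u).2 hu
        have : E p = u := (M.F.eq_one_iff _ u).1 hRu
        rw [← this]
        exact hA
      refine ⟨hC.1, fun B hB => ?_⟩
      rcases Finset.mem_insert.1 hB with e | hB
      · subst e; exact hA
      · exact hC.2 B (Finset.mem_insert_of_mem hB)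
  | @boxR cut t p Γ Δ ts A l hsub hprem ih =>
      intro M E hemb hf
      have h := sub?_of_subAt hsub
      have hE : Emb' M t E := by
        intro q i l' hl
        exact (isEmb_iff.1 hemb) q i l' (by rw [labelAt_setSeq q p t _ _ i h]; exact hl)
      have hfC : FU' M _ E := falseUnder_iff.1 hf
      have hC : NodeOK M E p Γ (insert (l.box A) Δ) :=
        hfC p _ _ (by rw [seq?_setSeq p p t _ _ h, if_pos rfl])
      have hbox : E p ∉ M.val (l.box A) := hC.2 _ (Finset.mem_insert_self _ _)
      obtain ⟨lα, lmem, lne, ld⟩ := l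
      obtain ⟨s₀, hcond, hA⟩ : ∃ s₀ : M.F.S,
          ((ld = Side.c → lα ≤ M.F.R (E p) s₀) ∧ (ld = Side.o → lα < M.F.R (E p) s₀)) ∧
            s₀ ∉ M.val A := by
        cases ld with
        | c =>
            have hbox' : ¬ ∀ u, lα ≤ M.F.R (E p) u → u ∈ M.val A := hbox
            push_neg at hbox'
            obtain ⟨u, hu1, hu2⟩ := hbox'
            refine ⟨u, ⟨fun _ => hu1, fun e => ?_⟩, hu2⟩
            cases e
        | o =>
            have hbox' : ¬ ∀ u, lα < M.F.R (E p) u → u ∈ M.val A := hbox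
            push_neg at hbox'
            obtain ⟨u, hu1, hu2⟩ := hbox'
            refine ⟨u, ⟨fun e => ?_, fun _ => hu1⟩, hu2⟩
            cases e
      set L : MBLab Pm := ⟨lα, lmem, lne, ld⟩ with hL
      set E' : List ℕ → M.F.S := fun q => if q = p ++ [nslen ts] then s₀ else E q with hE'
      have hsubnone : t.sub? (p ++ [nslen ts]) = none := by
        rw [sub?_append, h, Option.bind_some, sub?_cons, get_nslen]
        rfl
      have hlabnone : ∀ j i', labelAt t ((p ++ [nslen ts]) ++ j) i' = none := by
        intro j i'
        rw [labelAt_eq, sub?_append, hsubnone]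
        rfl
      have hlabnone1 : ∀ i', labelAt t (p ++ [nslen ts]) i' = none := by
        intro i'
        rw [labelAt_eq, hsubnone]
        rfl
      have hlabnone2 : labelAt t p (nslen ts) = none := by
        rw [labelAt_eq, h, Option.bind_some]
        show (NSeqs.get ts (nslen ts)).map Prod.fst = none
        rw [get_nslen]
        rfl
      have hE'p : ∀ q, q ≠ p ++ [nslen ts] → E' q = E q := by
        intro q hq
        rw [hE']
        simp only [if_neg hq]
      refine ih M E' (isEmb_iff.2 ?_) (falseUnder_iff.2 ?_)
      · intro q j l' hl
        rw [labelAt_addChild q p t L ∅ {A} j h] at hl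
        by_cases hcase : q = p ∧ j = nslen ts
        · rw [if_pos hcase] at hl
          cases hl
          obtain ⟨e1, e2⟩ := hcase
          subst e1; subst e2
          have hq1 : E' q = E q := hE'p q (ne_append_singleton q (nslen ts))
          have hq2 : E' (q ++ [nslen ts]) = s₀ := by rw [hE']; simp
          rw [hq1, hq2]
          exact hcond
        · rw [if_neg hcase] at hl
          have hne1 : q ≠ p ++ [nslen ts] := by
            intro e
            rw [e, hlabnone1] at hl
            cases hl
          have hne2 : q ++ [j] ≠ p ++ [nslen ts] := by
            intro e
            obtain ⟨e1, e2⟩ := append_singleton_inj e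
            rw [e1, e2, hlabnone2] at hl
            cases hl
          rw [hE'p q hne1, hE'p _ hne2]
          exact hE q j l' hl
      · intro q Γq Δq hq
        rw [seq?_addChild q p t L ∅ {A} h] at hq
        by_cases hcase : q = p ++ [nslen ts]
        · rw [if_pos hcase] at hq
          cases hq
          refine ⟨fun B hB => absurd hB (Finset.notMem_empty B), fun B hB => ?_⟩
          rw [Finset.mem_singleton] at hB
          subst hB
          have : E' q = s₀ := by rw [hE']; simp [hcase]
          rw [this]
          exact hA
        · rw [if_neg hcase] at hq
          have hEq : E' q = E q := hE'p q hcase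
          by_cases hqp : q = p
          · subst hqp
            rw [seq?_eq_some h] at hq
            cases hq
            exact NodeOK.congr hEq (hC.mono (Finset.Subset.refl _) (Finset.subset_insert _ _))
          · refine NodeOK.congr hEq ?_
            exact hfC q Γq Δq (by rw [seq?_setSeq q p t _ _ h, if_neg hqp]; exact hq)


/-- Soundness of NSMB: if a nested-sequent is provable in
NSMB, then it is valid. -/
theorem soundness_NSMB {Pm : MBParams} (t : NSeq Pm) (h : Provable true t) :
    NSValid t := soundness_aux h

end MBQL
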